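/- Let t > 0, let λ : [0, t] → [0, ∞) be integrable with Λ(t) = ∫_0^t λ(a) da > 0, let R > 0 and let L : [0, t] → ℝ be measurable with R ≤ L(a) ≤ L_0 for all a. Let (A_i, ξ_i, τ_i), 1 ≤ i ≤ n, be i.i.d. triples of mutually independent components, where A_i has density a ↦ λ(a)/Λ(t) on [0, t], ξ_i has continuous cumulative distribution function F_ξ, and τ_i ≥ 0 has continuous cumulative distribution function F_τ. Assume φ(t) = (1/Λ(t)) ∫_0^t λ(a) F_ξ(L(a)) da > 0. Let M = max_{1 ≤ i ≤ n} ξ_i · 1{ξ_i ≥ R} · 1{τ_i ≥ t − A_i}. Then for every y > 0, P( M > y | ξ_i < L(A_i) for all 1 ≤ i ≤ n ) = 1 − ( 1 − ψ(t, y)/φ(t) )^n, where ψ(t, y) = (1/Λ(t)) ∫_0^t λ(a) (1 − F_τ(t − a)) ( F_ξ( max(L(a), y) ) − F_ξ( max(R, y) ) ) da. -/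

import Mathlib

open MeasureTheory ProbabilityTheory

section CDF
variable {μ : Measure ℝ} [IsProbabilityMeasure μ] {F : ℝ → ℝ}

lemma my_cdf_Iic (hF : ∀ x, F x = (μ (Set.Iic x)).toReal) (x : ℝ) :
    μ (Set.Iic x) = ENNReal.ofReal (F x) := by
  rw [hF, ENNReal.ofReal_toReal (measure_ne_top μ _)]

lemma my_cdf_mono (hF : ∀ x, F x = (μ (Set.Iic x)).toReal) : Monotone F := by
  intro a b hab
  rw [hF, hF]
  exact ENNReal.toReal_mono (measure_ne_top μ _) (measure_mono (Set.Iic_subset_Iic.2 hab))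

lemma my_cdf_nonneg (hF : ∀ x, F x = (μ (Set.Iic x)).toReal) (x : ℝ) : 0 ≤ F x := by
  rw [hF]; exact ENNReal.toReal_nonneg

lemma my_cdf_le_one (hF : ∀ x, F x = (μ (Set.Iic x)).toReal) (x : ℝ) : F x ≤ 1 := by
  rw [hF]
  calc (μ (Set.Iic x)).toReal ≤ (1 : ENNReal).toReal :=
        ENNReal.toReal_mono (by simp) prob_le_one
    _ = 1 := by simp

lemma my_cdf_singleton (hF : ∀ x, F x = (μ (Set.Iic x)).toReal) (hc : Continuous F) (x : ℝ) :
    μ {x} = 0 := by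
  have key : ∀ n : ℕ, (μ {x}).toReal ≤ F x - F (x - 1/(n+1)) := by
    intro n
    have hlt : x - 1/(n+1) < x := by
      have : (0:ℝ) < 1/(n+1) := by positivity
      linarith
    have hsub : {x} ⊆ Set.Ioc (x - 1/(n+1)) x := by
      intro z hz
      simp only [Set.mem_singleton_iff] at hz
      subst hz
      exact ⟨hlt, le_refl _⟩
    have hIoc : Set.Ioc (x - 1/(n+1)) x = Set.Iic x \ Set.Iic (x - 1/(n+1)) := by
      ext z; simp [Set.mem_Ioc, and_comm]
    have hdiff : μ (Set.Ioc (x - 1/(n+1)) x) = μ (Set.Iic x) - μ (Set.Iic (x - 1/(n+1))) := by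
      rw [hIoc]
      exact measure_diff (Set.Iic_subset_Iic.2 hlt.le) measurableSet_Iic.nullMeasurableSet
        (measure_ne_top μ _)
    have h1 : (μ {x}).toReal ≤ (μ (Set.Ioc (x - 1/(n+1)) x)).toReal :=
      ENNReal.toReal_mono (measure_ne_top μ _) (measure_mono hsub)
    rw [hdiff, ENNReal.toReal_sub_of_le (measure_mono (Set.Iic_subset_Iic.2 hlt.le))
      (measure_ne_top μ _), ← hF, ← hF] at h1
    exact h1
  have hten : Filter.Tendsto (fun n : ℕ => F x - F (x - 1/(n+1))) Filter.atTop (nhds 0) := by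
    have h0 : Filter.Tendsto (fun n : ℕ => x - 1/(n+1)) Filter.atTop (nhds x) := by
      have := tendsto_one_div_add_atTop_nhds_zero_nat (𝕜 := ℝ)
      have := (tendsto_const_nhds (x := x) (f := Filter.atTop (α := ℕ))).sub this
      simpa using this
    have := (tendsto_const_nhds (x := F x) (f := Filter.atTop (α := ℕ))).sub
      ((hc.tendsto x).comp h0)
    simpa using this
  have hle : (μ {x}).toReal ≤ 0 := ge_of_tendsto' hten key
  have : (μ {x}).toReal = 0 := le_antisymm hle ENNReal.toReal_nonneg
  exact (ENNReal.toReal_eq_zero_iff _).mp this |>.resolve_right (measure_ne_top μ _)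

lemma my_cdf_Iio (hF : ∀ x, F x = (μ (Set.Iic x)).toReal) (hc : Continuous F) (x : ℝ) :
    μ (Set.Iio x) = ENNReal.ofReal (F x) := by
  have : Set.Iio x = Set.Iic x \ {x} := by ext z; simp [lt_iff_le_and_ne]
  rw [this, measure_diff_null (my_cdf_singleton hF hc x), my_cdf_Iic hF]

lemma my_cdf_Ici (hF : ∀ x, F x = (μ (Set.Iic x)).toReal) (hc : Continuous F) (s : ℝ) :
    μ (Set.Ici s) = ENNReal.ofReal (1 - F s) := by
  have hcompl : Set.Ici s = (Set.Iio s)ᶜ := by simp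
  rw [hcompl, measure_compl measurableSet_Iio (measure_ne_top μ _), my_cdf_Iio hF hc,
    measure_univ, ENNReal.ofReal_sub _ (my_cdf_nonneg hF s), ENNReal.ofReal_one]

lemma my_cdf_band (hF : ∀ x, F x = (μ (Set.Iic x)).toReal) (hc : Continuous F)
    {y R c : ℝ} (hRc : R ≤ c) :
    μ {x | R ≤ x ∧ y < x ∧ x < c} = ENNReal.ofReal (F (max c y) - F (max R y)) := by
  rcases le_or_gt c y with hcy | hyc
  · have hempty : {x | R ≤ x ∧ y < x ∧ x < c} = ∅ := by
      ext z; simp only [Set.mem_setOf_eq, Set.mem_empty_iff_false, iff_false]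
      rintro ⟨_, h1, h2⟩; linarith
    rw [hempty, measure_empty, max_eq_right hcy, max_eq_right (hRc.trans hcy)]
    simp
  · set m := max R y with hm
    have hmc : m ≤ c := max_le hRc hyc.le
    have hmeq : μ {x | R ≤ x ∧ y < x ∧ x < c} = μ (Set.Ioo m c) := by
      apply le_antisymm
      · have hsub : {x | R ≤ x ∧ y < x ∧ x < c} ⊆ Set.Ioo m c ∪ {m} := by
          intro z ⟨h1, h2, h3⟩
          rcases eq_or_lt_of_le (max_le h1 h2.le : m ≤ z) with h | h
          · exact Or.inr (by simp [h.symm, hm])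
          · exact Or.inl ⟨h, h3⟩
        calc μ {x | R ≤ x ∧ y < x ∧ x < c} ≤ μ (Set.Ioo m c ∪ {m}) := measure_mono hsub
          _ ≤ μ (Set.Ioo m c) + μ {m} := measure_union_le _ _
          _ = μ (Set.Ioo m c) := by rw [my_cdf_singleton hF hc m, add_zero]
      · apply measure_mono
        intro z hz
        exact ⟨le_of_lt (lt_of_le_of_lt (le_max_left R y) hz.1),
          lt_of_le_of_lt (le_max_right R y) hz.1, hz.2⟩
    rw [hmeq, max_eq_left hyc.le]
    rcases eq_or_lt_of_le hmc with h | h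
    · rw [← h, Set.Ioo_self, measure_empty]
      simp
    · have hIoo : Set.Ioo m c = Set.Iio c \ Set.Iic m := by
        ext z; simp only [Set.mem_Ioo, Set.mem_diff, Set.mem_Iio, Set.mem_Iic, not_le]
        tauto
      have hd : μ (Set.Iio c \ Set.Iic m) = μ (Set.Iio c) - μ (Set.Iic m) :=
        measure_diff (fun z hz => lt_of_le_of_lt hz h)
          measurableSet_Iic.nullMeasurableSet (measure_ne_top μ _)
      rw [hIoo, hd, my_cdf_Iio hF hc, my_cdf_Iic hF,
        ENNReal.ofReal_sub _ (my_cdf_nonneg hF m)]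

lemma my_triple_law {Ω : Type*} [MeasureSpace Ω] [IsProbabilityMeasure (ℙ : Measure Ω)]
    (A ξ τ : Ω → ℝ) (hA : Measurable A) (hξ : Measurable ξ) (hτ : Measurable τ)
    (h : iIndepFun ![A, ξ, τ] ℙ) :
    Measure.map (fun ω => (A ω, ξ ω, τ ω)) ℙ
      = (Measure.map A ℙ).prod ((Measure.map ξ ℙ).prod (Measure.map τ ℙ)) := by
  have hmeas : ∀ i, Measurable (![A, ξ, τ] i) := by
    intro i; fin_cases i <;> assumption
  have h23 : IndepFun ξ τ ℙ := h.indepFun (by decide : (1 : Fin 3) ≠ 2)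
  have h0_23 : IndepFun A (fun ω => (ξ ω, τ ω)) ℙ :=
    (h.indepFun_prodMk hmeas 1 2 0 (by decide) (by decide)).symm
  rw [(indepFun_iff_map_prod_eq_prod_map_map hA.aemeasurable
      ((hξ.prodMk hτ).aemeasurable)).mp h0_23,
    (indepFun_iff_map_prod_eq_prod_map_map hξ.aemeasurable hτ.aemeasurable).mp h23]

lemma my_lint_density (t Lam : ℝ) (ht : 0 < t) (l : ℝ → ℝ)
    (hl_int : IntegrableOn l (Set.Icc 0 t)) (hl_nonneg : ∀ a ∈ Set.Icc (0:ℝ) t, 0 ≤ l a)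
    (hLam_pos : 0 < Lam)
    (g : ℝ → ℝ) (hg : Measurable g) (hg0 : ∀ a, 0 ≤ g a) (hg1 : ∀ a, g a ≤ 1) :
    ∫⁻ a, ENNReal.ofReal (g a)
        ∂((volume.restrict (Set.Icc (0:ℝ) t)).withDensity (fun a => ENNReal.ofReal (l a / Lam)))
      = ENNReal.ofReal ((1/Lam) * ∫ a in (0:ℝ)..t, l a * g a) := by
  have hdens : AEMeasurable (fun a => ENNReal.ofReal (l a / Lam))
      (volume.restrict (Set.Icc (0:ℝ) t)) :=
    ENNReal.measurable_ofReal.comp_aemeasurable (hl_int.aemeasurable.div_const Lam)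
  rw [lintegral_withDensity_eq_lintegral_mul₀ hdens
    (hg.ennreal_ofReal.aemeasurable)]
  have hae : ∀ᵐ a ∂(volume.restrict (Set.Icc (0:ℝ) t)),
      ((fun a => ENNReal.ofReal (l a / Lam)) * fun a => ENNReal.ofReal (g a)) a
        = ENNReal.ofReal (l a / Lam * g a) := by
    refine (ae_restrict_mem measurableSet_Icc).mono fun a ha => ?_
    simp only [Pi.mul_apply]
    rw [← ENNReal.ofReal_mul (div_nonneg (hl_nonneg a ha) hLam_pos.le)]
  rw [lintegral_congr_ae hae]
  have hint : Integrable (fun a => l a / Lam * g a) (volume.restrict (Set.Icc (0:ℝ) t)) := by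
    have : Integrable (fun a => g a * (l a / Lam)) (volume.restrict (Set.Icc (0:ℝ) t)) := by
      refine Integrable.bdd_mul (c := 1) (hl_int.div_const Lam) (hg.aestronglyMeasurable) ?_
      exact Filter.Eventually.of_forall fun a => by rw [Real.norm_eq_abs, abs_of_nonneg (hg0 a)]; exact hg1 a
    exact this.congr (Filter.Eventually.of_forall fun a => by ring)
  have hnn : 0 ≤ᵐ[volume.restrict (Set.Icc (0:ℝ) t)] fun a => l a / Lam * g a := by
    refine (ae_restrict_mem measurableSet_Icc).mono fun a ha => ?_
    exact mul_nonneg (div_nonneg (hl_nonneg a ha) hLam_pos.le) (hg0 a)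
  rw [← ofReal_integral_eq_lintegral_ofReal hint hnn]
  congr 1
  rw [MeasureTheory.integral_Icc_eq_integral_Ioc, ← intervalIntegral.integral_of_le ht.le,
    ← intervalIntegral.integral_const_mul]
  refine intervalIntegral.integral_congr fun a _ => ?_
  ring
lemma my_per_triple {Ω : Type*} [MeasureSpace Ω] [IsProbabilityMeasure (ℙ : Measure Ω)]
    (t Lam : ℝ) (ht : 0 < t) (l : ℝ → ℝ)
    (hl_int : IntegrableOn l (Set.Icc 0 t)) (hl_nonneg : ∀ a ∈ Set.Icc (0:ℝ) t, 0 ≤ l a)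
    (hLam_pos : 0 < Lam)
    (A ξ τ : Ω → ℝ) (hA : Measurable A) (hξ : Measurable ξ) (hτ : Measurable τ)
    (hAlaw : Measure.map A ℙ = (volume.restrict (Set.Icc (0:ℝ) t)).withDensity
        (fun a => ENNReal.ofReal (l a / Lam)))
    (hindep : iIndepFun ![A, ξ, τ] ℙ)
    (S : Set (ℝ × ℝ × ℝ)) (hS : MeasurableSet S)
    (g : ℝ → ℝ) (hg : Measurable g) (hg0 : ∀ a, 0 ≤ g a) (hg1 : ∀ a, g a ≤ 1)
    (hslice : ∀ a ∈ Set.Icc (0:ℝ) t,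
      ((Measure.map ξ ℙ).prod (Measure.map τ ℙ)) (Prod.mk a ⁻¹' S) = ENNReal.ofReal (g a)) :
    ℙ ((fun ω => (A ω, ξ ω, τ ω)) ⁻¹' S)
      = ENNReal.ofReal ((1/Lam) * ∫ a in (0:ℝ)..t, l a * g a) := by
  have htriple : Measurable fun ω => (A ω, ξ ω, τ ω) := hA.prodMk (hξ.prodMk hτ)
  haveI : IsProbabilityMeasure (Measure.map ξ ℙ) := Measure.isProbabilityMeasure_map hξ.aemeasurable
  haveI : IsProbabilityMeasure (Measure.map τ ℙ) := Measure.isProbabilityMeasure_map hτ.aemeasurable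
  rw [← Measure.map_apply htriple hS, my_triple_law A ξ τ hA hξ hτ hindep,
    Measure.prod_apply hS, hAlaw]
  have hae : ∀ᵐ a ∂((volume.restrict (Set.Icc (0:ℝ) t)).withDensity
      (fun a => ENNReal.ofReal (l a / Lam))),
      ((Measure.map ξ ℙ).prod (Measure.map τ ℙ)) (Prod.mk a ⁻¹' S) = ENNReal.ofReal (g a) :=
    (withDensity_absolutelyContinuous _ _).ae_le
      ((ae_restrict_mem measurableSet_Icc).mono hslice)
  rw [lintegral_congr_ae hae]
  exact my_lint_density t Lam ht l hl_int hl_nonneg hLam_pos g hg hg0 hg1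

/-- Conditional on the event that none of the `n` i.i.d. offers reaches the prevailing
list price, the best available offer `M` satisfies
`P(M > y | β > t) = 1 − (1 − ψ(t,y)/φ(t))^n` for every `y > 0`. -/
theorem conditional_best_offer_tail
    {Ω : Type*} [MeasureSpace Ω] [IsProbabilityMeasure (ℙ : Measure Ω)]
    (t : ℝ) (ht : 0 < t)
    (l : ℝ → ℝ) (hl_int : IntegrableOn l (Set.Icc 0 t))
    (hl_nonneg : ∀ a ∈ Set.Icc (0:ℝ) t, 0 ≤ l a)
    (Lam : ℝ) (hLam : Lam = ∫ a in (0:ℝ)..t, l a) (hLam_pos : 0 < Lam)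
    (R L0 : ℝ) (hR : 0 < R)
    (L : ℝ → ℝ) (hL : Measurable L)
    (hLbounds : ∀ a ∈ Set.Icc (0:ℝ) t, R ≤ L a ∧ L a ≤ L0)
    (Fξ : ℝ → ℝ) (hFξ_cont : Continuous Fξ)
    (Fτ : ℝ → ℝ) (hFτ_cont : Continuous Fτ)
    (n : ℕ) (hn : 0 < n)
    (A ξ τ : Fin n → Ω → ℝ)
    (hA : ∀ i, Measurable (A i)) (hξ : ∀ i, Measurable (ξ i)) (hτ : ∀ i, Measurable (τ i))
    (hτ_nonneg : ∀ i ω, 0 ≤ τ i ω)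
    (hAlaw : ∀ i, Measure.map (A i) ℙ
      = (volume.restrict (Set.Icc (0:ℝ) t)).withDensity
          (fun a => ENNReal.ofReal (l a / Lam)))
    (hFξ : ∀ i, ∀ x : ℝ, Fξ x = (ℙ {ω | ξ i ω ≤ x}).toReal)
    (hFτ : ∀ i, ∀ x : ℝ, Fτ x = (ℙ {ω | τ i ω ≤ x}).toReal)
    (hcomp_indep : ∀ i, iIndepFun ![A i, ξ i, τ i] ℙ)
    (hiid : iIndepFun (fun i ω => (A i ω, ξ i ω, τ i ω)) ℙ)
    (phi : ℝ) (hphi : phi = (1 / Lam) * ∫ a in (0:ℝ)..t, l a * Fξ (L a))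
    (hphi_pos : 0 < phi)
    (psi : ℝ → ℝ)
    (hpsi : ∀ y : ℝ, psi y = (1 / Lam) * ∫ a in (0:ℝ)..t,
      l a * (1 - Fτ (t - a)) * (Fξ (max (L a) y) - Fξ (max R y))) :
    ∀ y : ℝ, 0 < y →
      ((ℙ[|{ω | ∀ i, ξ i ω < L (A i ω)}])
          {ω | y < Finset.univ.sup'
              (Finset.univ_nonempty_iff.mpr (Fin.pos_iff_nonempty.mp hn))
              (fun i => ξ i ω * (if R ≤ ξ i ω then (1:ℝ) else 0)
                * (if t - A i ω ≤ τ i ω then (1:ℝ) else 0))}).toReal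
        = 1 - (1 - psi y / phi) ^ n := by
  intro y hy
  -- CDF facts transported to the map measures
  haveI hPMξ : ∀ i, IsProbabilityMeasure (Measure.map (ξ i) ℙ) :=
    fun i => Measure.isProbabilityMeasure_map (hξ i).aemeasurable
  haveI hPMτ : ∀ i, IsProbabilityMeasure (Measure.map (τ i) ℙ) :=
    fun i => Measure.isProbabilityMeasure_map (hτ i).aemeasurable
  have hFξmap : ∀ i, ∀ x : ℝ, Fξ x = ((Measure.map (ξ i) ℙ) (Set.Iic x)).toReal := by
    intro i x
    rw [hFξ i x, Measure.map_apply (hξ i) measurableSet_Iic]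
    rfl
  have hFτmap : ∀ i, ∀ x : ℝ, Fτ x = ((Measure.map (τ i) ℙ) (Set.Iic x)).toReal := by
    intro i x
    rw [hFτ i x, Measure.map_apply (hτ i) measurableSet_Iic]
    rfl
  have i0 : Fin n := ⟨0, hn⟩
  have hFξ0 : ∀ x, 0 ≤ Fξ x := my_cdf_nonneg (hFξmap i0)
  have hFξ1 : ∀ x, Fξ x ≤ 1 := my_cdf_le_one (hFξmap i0)
  have hFξmono : Monotone Fξ := my_cdf_mono (hFξmap i0)
  have hFτ0 : ∀ x, 0 ≤ Fτ x := my_cdf_nonneg (hFτmap i0)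
  have hFτ1 : ∀ x, Fτ x ≤ 1 := my_cdf_le_one (hFτmap i0)
  -- the two sets in ℝ³ and the two slice functions
  set SE : Set (ℝ × ℝ × ℝ) := {p | p.2.1 < L p.1} with hSEdef
  set SG : Set (ℝ × ℝ × ℝ) := {p | y < p.2.1 ∧ R ≤ p.2.1 ∧ t - p.1 ≤ p.2.2} with hSGdef
  have hSE : MeasurableSet SE := measurableSet_lt measurable_snd.fst (hL.comp measurable_fst)
  have hSG : MeasurableSet SG :=
    MeasurableSet.inter (measurableSet_lt measurable_const measurable_snd.fst)
      (MeasurableSet.inter (measurableSet_le measurable_const measurable_snd.fst)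
        (measurableSet_le (measurable_const.sub measurable_fst) measurable_snd.snd))
  set gE : ℝ → ℝ := fun a => Fξ (L a) with hgEdef
  set gG : ℝ → ℝ :=
    fun a => (1 - Fτ (t - a)) * (Fξ (max (max (L a) R) y) - Fξ (max R y)) with hgGdef
  have hgE_meas : Measurable gE := hFξ_cont.measurable.comp hL
  have hgG_meas : Measurable gG :=
    ((measurable_const.sub (hFτ_cont.measurable.comp (measurable_const.sub measurable_id))).mul
      ((hFξ_cont.measurable.comp ((hL.max measurable_const).max measurable_const)).sub
        measurable_const))
  have hgG_diff_nonneg : ∀ a : ℝ, 0 ≤ Fξ (max (max (L a) R) y) - Fξ (max R y) := by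
    intro a
    exact sub_nonneg.2 (hFξmono (max_le_max (le_max_right (L a) R) le_rfl))
  have hgG0 : ∀ a, 0 ≤ gG a := by
    intro a
    exact mul_nonneg (by linarith [hFτ1 (t - a)]) (hgG_diff_nonneg a)
  have hgG1 : ∀ a, gG a ≤ 1 := by
    intro a
    have h1 : 1 - Fτ (t - a) ≤ 1 := by linarith [hFτ0 (t - a)]
    have h2 : Fξ (max (max (L a) R) y) - Fξ (max R y) ≤ 1 := by
      linarith [hFξ1 (max (max (L a) R) y), hFξ0 (max R y)]
    have h0 : 0 ≤ Fξ (max (max (L a) R) y) - Fξ (max R y) := hgG_diff_nonneg a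
    calc (1 - Fτ (t - a)) * (Fξ (max (max (L a) R) y) - Fξ (max R y)) ≤ 1 * 1 := by nlinarith [hFτ1 (t - a)]
      _ = 1 := by ring
  -- per-individual probabilities
  have hPE : ∀ i, ℙ ((fun ω => (A i ω, ξ i ω, τ i ω)) ⁻¹' SE) = ENNReal.ofReal phi := by
    intro i
    haveI := hPMξ i; haveI := hPMτ i
    rw [my_per_triple t Lam ht l hl_int hl_nonneg hLam_pos (A i) (ξ i) (τ i)
      (hA i) (hξ i) (hτ i) (hAlaw i) (hcomp_indep i) SE hSE gE hgE_meas
      (fun a => hFξ0 _) (fun a => hFξ1 _) ?_, hphi]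
    intro a _
    have hpre : Prod.mk a ⁻¹' SE = Set.Iio (L a) ×ˢ (Set.univ : Set ℝ) := by
      ext q; simp [hSEdef]
    rw [hpre, Measure.prod_prod, measure_univ, mul_one,
      my_cdf_Iio (hFξmap i) hFξ_cont]
  have hPEG : ∀ i, ℙ ((fun ω => (A i ω, ξ i ω, τ i ω)) ⁻¹' (SE ∩ SG))
      = ENNReal.ofReal (psi y) := by
    intro i
    haveI := hPMξ i; haveI := hPMτ i
    rw [my_per_triple t Lam ht l hl_int hl_nonneg hLam_pos (A i) (ξ i) (τ i)
      (hA i) (hξ i) (hτ i) (hAlaw i) (hcomp_indep i) (SE ∩ SG) (hSE.inter hSG)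
      gG hgG_meas hgG0 hgG1 ?_]
    · congr 1
      rw [hpsi y]
      congr 1
      refine intervalIntegral.integral_congr fun a ha => ?_
      rw [Set.uIcc_of_le ht.le] at ha
      have hLa := (hLbounds a ha).1
      simp only [hgGdef]
      rw [max_eq_left hLa]
      ring
    · intro a ha
      have hLa := (hLbounds a ha).1
      have hpre : Prod.mk a ⁻¹' (SE ∩ SG)
          = {x | R ≤ x ∧ y < x ∧ x < L a} ×ˢ Set.Ici (t - a) := by
        ext q
        simp only [hSEdef, hSGdef, Set.mem_preimage, Set.mem_inter_iff, Set.mem_setOf_eq,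
          Set.mem_prod, Set.mem_Ici]
        tauto
      rw [hpre, Measure.prod_prod, my_cdf_band (hFξmap i) hFξ_cont hLa,
        my_cdf_Ici (hFτmap i) hFτ_cont,
        ← ENNReal.ofReal_mul (sub_nonneg.2 (hFξmono (max_le_max hLa le_rfl)))]
      congr 1
      simp only [hgGdef]
      rw [max_eq_left hLa]
      ring
  -- nonnegativity and comparison of psi and phi
  have hψ0 : 0 ≤ psi y := by
    rw [hpsi y]
    refine mul_nonneg (by positivity) (intervalIntegral.integral_nonneg ht.le fun u hu => ?_)
    have hLu := (hLbounds u hu).1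
    have := hFξmono (max_le_max hLu (le_refl y))
    refine mul_nonneg (mul_nonneg (hl_nonneg u hu) (by linarith [hFτ1 (t - u)])) (by linarith)
  have hψφ : psi y ≤ phi := by
    have hle : ENNReal.ofReal (psi y) ≤ ENNReal.ofReal phi := by
      rw [← hPEG i0, ← hPE i0]
      exact measure_mono (Set.preimage_mono Set.inter_subset_left)
    exact (ENNReal.ofReal_le_ofReal_iff hphi_pos.le).mp hle
  -- per-individual complement probability
  have hPEGc : ∀ i, ℙ ((fun ω => (A i ω, ξ i ω, τ i ω)) ⁻¹' (SE ∩ SGᶜ))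
      = ENNReal.ofReal (phi - psi y) := by
    intro i
    set f := fun ω => (A i ω, ξ i ω, τ i ω) with hfdef
    have hmeasf : Measurable f := (hA i).prodMk ((hξ i).prodMk (hτ i))
    have hkey := measure_inter_add_diff (μ := ℙ) (f ⁻¹' SE) (hmeasf hSG)
    have h1 : f ⁻¹' SE ∩ f ⁻¹' SG = f ⁻¹' (SE ∩ SG) := by rw [Set.preimage_inter]
    have h2 : f ⁻¹' SE \ f ⁻¹' SG = f ⁻¹' (SE ∩ SGᶜ) := by
      rw [Set.preimage_inter, Set.preimage_compl, Set.diff_eq]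
    rw [h1, h2, hPEG i, hPE i] at hkey
    have hkey' : ℙ (f ⁻¹' (SE ∩ SGᶜ)) + ENNReal.ofReal (psi y) = ENNReal.ofReal phi := by
      rw [add_comm]; exact hkey
    have hfin : ENNReal.ofReal (psi y) ≠ ⊤ := ENNReal.ofReal_ne_top
    rw [ENNReal.eq_sub_of_add_eq hfin hkey', ← ENNReal.ofReal_sub _ hψ0]
  -- events in Ω
  set C : Set Ω := {ω | ∀ i, ξ i ω < L (A i ω)} with hCdef
  have hCeq : C = ⋂ i, (fun ω => (A i ω, ξ i ω, τ i ω)) ⁻¹' SE := by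
    ext ω; simp [hCdef, hSEdef]
  set B : Set Ω := ⋃ i, (fun ω => (A i ω, ξ i ω, τ i ω)) ⁻¹' SG with hBdef
  have htriple_meas : ∀ i, Measurable fun ω => (A i ω, ξ i ω, τ i ω) :=
    fun i => (hA i).prodMk ((hξ i).prodMk (hτ i))
  have hC : MeasurableSet C := by
    rw [hCeq]; exact MeasurableSet.iInter fun i => htriple_meas i hSE
  have hB : MeasurableSet B := MeasurableSet.iUnion fun i => htriple_meas i hSG
  -- identify the target set with B
  have hBeq : {ω | y < Finset.univ.sup'
      (Finset.univ_nonempty_iff.mpr (Fin.pos_iff_nonempty.mp hn))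
      (fun i => ξ i ω * (if R ≤ ξ i ω then (1:ℝ) else 0)
        * (if t - A i ω ≤ τ i ω then (1:ℝ) else 0))} = B := by
    ext ω
    rw [Set.mem_setOf_eq, Finset.lt_sup'_iff]
    simp only [hBdef, Set.mem_iUnion, Set.mem_preimage, hSGdef, Set.mem_setOf_eq,
      Finset.mem_univ, true_and]
    refine exists_congr fun i => ?_
    by_cases h1 : R ≤ ξ i ω <;> by_cases h2 : t - A i ω ≤ τ i ω <;>
      simp [h1, h2, (by linarith : ¬ y < 0)]
  -- product formulas
  have hPC : ℙ C = ENNReal.ofReal phi ^ n := by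
    rw [hCeq, hiid.meas_iInter fun i => ⟨SE, hSE, rfl⟩]
    simp [hPE]
  have hPD : ℙ (C \ B) = ENNReal.ofReal (phi - psi y) ^ n := by
    have hCBc : C \ B = ⋂ i, (fun ω => (A i ω, ξ i ω, τ i ω)) ⁻¹' (SE ∩ SGᶜ) := by
      rw [hCeq, hBdef]
      ext ω
      simp only [Set.mem_diff, Set.mem_iInter, Set.mem_iUnion, Set.mem_preimage,
        Set.mem_inter_iff, Set.mem_compl_iff, not_exists]
      constructor
      · rintro ⟨ha, hb⟩ i; exact ⟨ha i, hb i⟩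
      · intro h; exact ⟨fun i => (h i).1, fun i => (h i).2⟩
    rw [hCBc, hiid.meas_iInter fun i => ⟨SE ∩ SGᶜ, hSE.inter hSG.compl, rfl⟩]
    simp only [Set.preimage_inter, Set.preimage_compl] at hPEGc
    simp [hPEGc]
  have hPCB : ℙ (C ∩ B) = ENNReal.ofReal phi ^ n - ENNReal.ofReal (phi - psi y) ^ n := by
    have hkey := measure_inter_add_diff (μ := ℙ) C hB
    rw [hPD, hPC] at hkey
    exact ENNReal.eq_sub_of_add_eq (ENNReal.pow_ne_top ENNReal.ofReal_ne_top) hkey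
  -- finish
  rw [hBeq, cond_apply hC ℙ B, hPC, hPCB, ENNReal.toReal_mul, ENNReal.toReal_inv,
    ENNReal.toReal_sub_of_le
      (pow_le_pow_left' (ENNReal.ofReal_le_ofReal (by linarith)) n)
      (ENNReal.pow_ne_top ENNReal.ofReal_ne_top),
    ENNReal.toReal_pow, ENNReal.toReal_pow, ENNReal.toReal_ofReal hphi_pos.le,
    ENNReal.toReal_ofReal (by linarith)]
  have hφn : (0:ℝ) < phi ^ n := pow_pos hphi_pos n
  have h1 : (1 : ℝ) - psi y / phi = (phi - psi y) / phi := by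
    field_simp
  rw [h1, div_pow]
  field_simp
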